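/- Let T be a minimal rotation of the unit circle S¹ (rotation by an angle 2πθ with θ irrational) and let f be a homeomorphism of S¹ commuting with T. Then f is itself a rotation of S¹. -/

import Mathlib

open Set

/-- The subgroup `ℤθ + ℤ` of `ℝ` is dense when `θ` is irrational. -/
lemma dense_closure_irrational (θ : ℝ) (hθ : Irrational θ) :
    Dense ((AddSubgroup.closure ({θ, 1} : Set ℝ) : Set ℝ)) := by
  rcases AddSubgroup.dense_or_cyclic (AddSubgroup.closure ({θ, 1} : Set ℝ)) with h | ⟨a, ha⟩
  · exact h
  · exfalso
    have h1 : (1 : ℝ) ∈ AddSubgroup.closure ({θ, 1} : Set ℝ) :=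
      AddSubgroup.subset_closure (by simp)
    have hth : θ ∈ AddSubgroup.closure ({θ, 1} : Set ℝ) :=
      AddSubgroup.subset_closure (by simp)
    rw [ha, AddSubgroup.mem_closure_singleton] at h1 hth
    obtain ⟨m, hm⟩ := h1
    obtain ⟨n, hn⟩ := hth
    have hm0 : m ≠ 0 := by
      rintro rfl; simp at hm
    have ha0 : a ≠ 0 := by
      rintro rfl; simp at hm
    have hma : (m : ℝ) * a = 1 := by rw [← hm]; push_cast [zsmul_eq_mul]; ring
    have hna : (n : ℝ) * a = θ := by rw [← hn]; push_cast [zsmul_eq_mul]; ring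
    have hm0' : (m : ℝ) ≠ 0 := Int.cast_ne_zero.mpr hm0
    have : θ = (n : ℝ) / (m : ℝ) := by
      rw [← hna, eq_div_iff hm0']
      calc (n:ℝ) * a * m = (n:ℝ) * ((m:ℝ) * a) := by ring
        _ = n := by rw [hma, mul_one]
    exact hθ ⟨(n : ℚ) / (m : ℚ), by push_cast; rw [this]⟩

lemma Circle.exp_zsmul' (t : ℝ) (n : ℤ) : Circle.exp (n * t) = Circle.exp t ^ n := by
  induction n using Int.induction_on with
  | zero => simp
  | succ k ih =>
    push_cast at ih ⊢
    rw [add_mul, one_mul, Circle.exp_add, ih, zpow_add_one]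
  | pred k ih =>
    push_cast at ih ⊢
    rw [sub_mul, one_mul, Circle.exp_sub, ih, zpow_sub_one, div_eq_mul_inv]

/-- The powers of `exp (2πθ)` are dense in the circle for irrational `θ`. -/
lemma dense_range_zpow (θ : ℝ) (hθ : Irrational θ) :
    Dense (Set.range fun n : ℤ => Circle.exp (2 * Real.pi * θ) ^ n) := by
  have hS := dense_closure_irrational θ hθ
  set S : AddSubgroup ℝ := AddSubgroup.closure ({θ, 1} : Set ℝ)
  -- the map t ↦ exp (2π t)
  have hφcont : Continuous fun t : ℝ => Circle.exp (2 * Real.pi * t) := by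
    exact Circle.exp.continuous.comp (by continuity)
  have hφsurj : Function.Surjective fun t : ℝ => Circle.exp (2 * Real.pi * t) := by
    intro z
    refine ⟨Complex.arg z / (2 * Real.pi), ?_⟩
    have hπ : (2 * Real.pi) ≠ 0 := by positivity
    simp only [mul_div_cancel₀ _ hπ]
    exact Circle.exp_arg z
  have hrange : DenseRange fun t : ℝ => Circle.exp (2 * Real.pi * t) :=
    hφsurj.denseRange
  have himg : Dense ((fun t : ℝ => Circle.exp (2 * Real.pi * t)) '' S) :=
    hrange.dense_image hφcont hS
  refine himg.mono ?_
  rintro z ⟨t, htS, rfl⟩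
  -- t = n • θ + m • 1 for some integers
  have : t ∈ AddSubgroup.closure ({θ, 1} : Set ℝ) := htS
  rw [Set.insert_eq, AddSubgroup.closure_union,
    AddSubgroup.mem_sup] at this
  obtain ⟨y, hy, z', hz', rfl⟩ := this
  rw [AddSubgroup.mem_closure_singleton] at hy hz'
  obtain ⟨n, rfl⟩ := hy
  obtain ⟨m, rfl⟩ := hz'
  refine ⟨n, ?_⟩
  simp only [zsmul_eq_mul, mul_one]
  rw [mul_add, Circle.exp_add, show 2 * Real.pi * (n * θ) = n * (2 * Real.pi * θ) by ring,
    Circle.exp_zsmul', show 2 * Real.pi * (m : ℝ) = (m : ℤ) * (2 * Real.pi) by ring,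
    Circle.exp_int_mul_two_pi, mul_one]

theorem rotation_of_commutes_with_minimal_rotation
    (θ : ℝ) (hθ : Irrational θ) (f : Circle ≃ₜ Circle)
    (hcomm : ∀ x : Circle, f (Circle.exp (2 * Real.pi * θ) * x)
      = Circle.exp (2 * Real.pi * θ) * f x) :
    ∃ c : Circle, ∀ x : Circle, f x = c * x := by
  set a : Circle := Circle.exp (2 * Real.pi * θ) with ha
  -- g z = f z / z is continuous and invariant under multiplication by a
  set g : Circle → Circle := fun z => f z * z⁻¹ with hg
  have hgcont : Continuous g := (map_continuous f).mul (continuous_inv.comp continuous_id)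
  have hginv : ∀ z, g (a * z) = g z := by
    intro z
    show f (a * z) * (a * z)⁻¹ = f z * z⁻¹
    calc f (a * z) * (a * z)⁻¹ = (a * f z) * (a⁻¹ * z⁻¹) := by rw [hcomm z, mul_inv]
      _ = (a * a⁻¹) * (f z * z⁻¹) := mul_mul_mul_comm _ _ _ _
      _ = f z * z⁻¹ := by simp
  have hpow : ∀ n : ℤ, g (a ^ n) = g 1 := by
    have key : ∀ n : ℤ, g (a ^ n) = g (a ^ (n - 1)) := by
      intro n
      have := hginv (a ^ (n - 1))
      rwa [show a * a ^ (n - 1) = a ^ n by rw [← zpow_one_add]; ring_nf] at this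
    intro n
    induction n using Int.induction_on with
    | zero => simp
    | succ k ih =>
      have := key (k + 1)
      simpa [this] using ih
    | pred k ih =>
      rw [← key (-k)]; exact ih
  -- g is constant, by density of {a^n}
  have hconst : ∀ z, g z = g 1 := by
    intro z
    have hdense := dense_range_zpow θ hθ
    have hclosed : IsClosed {w : Circle | g w = g 1} :=
      isClosed_eq hgcont continuous_const
    have hsub : (Set.range fun n : ℤ => a ^ n) ⊆ {w : Circle | g w = g 1} := by
      rintro _ ⟨n, rfl⟩; exact hpow n
    exact hclosed.closure_subset_iff.mpr hsub (hdense z)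
  refine ⟨f 1, fun x => ?_⟩
  have := hconst x
  simp only [hg, mul_one, inv_one] at this
  calc f x = f x * x⁻¹ * x := by rw [mul_assoc]; simp
    _ = f 1 * x := by rw [this]
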